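/- Assume the left-sided M structure. Let c ∈ {0,1} with P(X=x, C=c) > 0 and P(A=a, C=c) > 0 for all x, a ∈ {0,1}. Then P(Y=1 | X=1, C=c) − P(Y=1 | X=0, C=c) = [ P(X=1 | A=1) − P(X=1 | A=0) ] · [ P(Y=1 | A=1, C=c) − P(Y=1 | A=0, C=c) ] · var(A | C=c) / var(X | C=c); that is, the extended collider bias on the risk difference scale equals the embedded V-bias risk difference multiplied by the risk difference representing the effect of A on X and by the variance ratio var(A | C=c)/var(X | C=c). -/

import Mathlib

open MeasureTheory ProbabilityTheory

variable {Ω : Type*} [MeasurableSpace Ω]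

/-- The event that the random variable `X` takes the value `x`. -/
def ev (X : Ω → ℝ) (x : ℝ) : Set Ω := {ω | X ω = x}

/-- The probability of an event, as a real number. -/
noncomputable def pr (P : Measure Ω) (s : Set Ω) : ℝ := (P s).toReal

/-- The conditional probability `P(s | t)`, as a real number. -/
noncomputable def cpr (P : Measure Ω) (s t : Set Ω) : ℝ := pr (P[|t]) s

/-- The covariance of two real-valued random variables. -/
noncomputable def rcov (P : Measure Ω) (X Y : Ω → ℝ) : ℝ :=
  ∫ ω, (X ω - ∫ ω', X ω' ∂P) * (Y ω - ∫ ω', Y ω' ∂P) ∂P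

/-- The conditional covariance of two real-valued random variables given an event. -/
noncomputable def covCond (P : Measure Ω) (X Y : Ω → ℝ) (t : Set Ω) : ℝ :=
  rcov (P[|t]) X Y

/-- The conditional variance of a real-valued random variable given an event. -/
noncomputable def varCond (P : Measure Ω) (X : Ω → ℝ) (t : Set Ω) : ℝ :=
  covCond P X X t

/-- A measurable `{0,1}`-valued random variable. -/
def IsBin (X : Ω → ℝ) : Prop := Measurable X ∧ ∀ ω, X ω = 0 ∨ X ω = 1

lemma ev_mble {Z : Ω → ℝ} (h : Measurable Z) (x : ℝ) : MeasurableSet (ev Z x) :=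
  h (measurableSet_singleton x)

lemma pr_nonneg (P : Measure Ω) (s : Set Ω) : 0 ≤ pr P s := ENNReal.toReal_nonneg

lemma pr_congr (P : Measure Ω) {s t : Set Ω} (h : s = t) : pr P s = pr P t := by rw [h]

lemma cpr_eq (P : Measure Ω) [IsFiniteMeasure P] (s t : Set Ω) (ht : MeasurableSet t)
    (h : 0 < pr P t) : cpr P s t = pr P (s ∩ t) / pr P t := by
  have h0 : P t ≠ 0 := by
    intro h0; rw [pr, h0] at h; simp at h
  have h1 : P t ≠ ⊤ := measure_ne_top P t
  rw [cpr, pr, cond_apply (μ := P) ht s, Set.inter_comm t s, ENNReal.toReal_mul,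
    ENNReal.toReal_inv]
  rw [pr, pr, div_eq_inv_mul]

lemma pr_split (P : Measure Ω) [IsFiniteMeasure P] {Z : Ω → ℝ} (hZ : IsBin Z) (s : Set Ω) :
    pr P s = pr P (s ∩ ev Z 0) + pr P (s ∩ ev Z 1) := by
  have hd : s ∩ ev Z 1 = s \ ev Z 0 := by
    ext ω
    simp only [Set.mem_inter_iff, Set.mem_diff, ev, Set.mem_setOf_eq]
    constructor
    · rintro ⟨h1, h2⟩; exact ⟨h1, by rw [h2]; norm_num⟩
    · rintro ⟨h1, h2⟩; rcases hZ.2 ω with h | h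
      · exact absurd h h2
      · exact ⟨h1, h⟩
  rw [hd, pr, pr, pr, ← ENNReal.toReal_add (measure_ne_top _ _) (measure_ne_top _ _)]
  congr 1
  exact (measure_inter_add_diff s (ev_mble hZ.1 0)).symm

lemma bin_indicator {Z : Ω → ℝ} (hZ : IsBin Z) :
    Z = (ev Z 1).indicator (fun _ => (1:ℝ)) := by
  classical
  funext ω
  rcases hZ.2 ω with h | h
  · rw [h, Set.indicator_apply, if_neg]
    intro hm
    simp only [ev, Set.mem_setOf_eq] at hm
    rw [h] at hm; norm_num at hm
  · rw [h, Set.indicator_apply, if_pos (show ω ∈ ev Z 1 from h)]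

lemma integrable_bin (Q : Measure Ω) [IsFiniteMeasure Q] {Z : Ω → ℝ} (hZ : IsBin Z) :
    Integrable Z Q := by
  rw [bin_indicator hZ]
  exact (integrable_const (1:ℝ)).indicator (ev_mble hZ.1 1)

lemma integral_bin (Q : Measure Ω) [IsFiniteMeasure Q] {Z : Ω → ℝ} (hZ : IsBin Z) :
    ∫ ω, Z ω ∂Q = pr Q (ev Z 1) := by
  conv_lhs => rw [bin_indicator hZ]
  rw [pr, ← measureReal_def, ← integral_indicator_one (ev_mble hZ.1 1)]
  rfl

lemma varCond_bin (P : Measure Ω) [IsProbabilityMeasure P] {Z : Ω → ℝ} (hZ : IsBin Z)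
    (t : Set Ω) (ht : MeasurableSet t) (hpt : 0 < pr P t) :
    varCond P Z t = cpr P (ev Z 1) t * (1 - cpr P (ev Z 1) t) := by
  have h0 : P t ≠ 0 := by intro h0; rw [pr, h0] at hpt; simp at hpt
  have : IsProbabilityMeasure (P[|t]) := cond_isProbabilityMeasure h0
  set Q := P[|t] with hQ
  set m := cpr P (ev Z 1) t with hm
  have hμ : ∫ ω, Z ω ∂Q = m := integral_bin Q hZ
  have hfun : (fun ω => (Z ω - ∫ ω', Z ω' ∂Q) * (Z ω - ∫ ω', Z ω' ∂Q)) =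
      fun ω => (1 - 2*m) * Z ω + m^2 := by
    funext ω
    rw [hμ]
    rcases hZ.2 ω with h | h <;> rw [h] <;> ring
  rw [varCond, covCond, rcov, hfun]
  rw [integral_add ((integrable_bin Q hZ).const_mul _) (integrable_const _),
    MeasureTheory.integral_const_mul, hμ, integral_const]
  simp [measure_univ]
  ring

lemma pr_univ (P : Measure Ω) [IsProbabilityMeasure P] : pr P Set.univ = 1 := by
  simp [pr]

lemma pr_perm1 (P : Measure Ω) (s t u v : Set Ω) :
    pr P (s ∩ t ∩ u ∩ v) = pr P (u ∩ v ∩ s ∩ t) :=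
  pr_congr P (by ext ω; simp only [Set.mem_inter_iff]; tauto)

lemma pr_perm2 (P : Measure Ω) (s t u v : Set Ω) :
    pr P (s ∩ (t ∩ u) ∩ v) = pr P (v ∩ s ∩ t ∩ u) :=
  pr_congr P (by ext ω; simp only [Set.mem_inter_iff]; tauto)

lemma pr_perm3 (P : Measure Ω) (s t u v : Set Ω) :
    pr P (s ∩ t ∩ u ∩ v) = pr P (s ∩ u ∩ v ∩ t) :=
  pr_congr P (by ext ω; simp only [Set.mem_inter_iff]; tauto)

lemma pr_perm4 (P : Measure Ω) (s t u v : Set Ω) :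
    pr P (s ∩ (t ∩ u) ∩ v) = pr P (t ∩ s ∩ v ∩ u) :=
  pr_congr P (by ext ω; simp only [Set.mem_inter_iff]; tauto)

/-- Left-sided M structure: the extended collider bias on the risk difference scale equals the
embedded V-bias risk difference times the risk difference for the effect of `A` on `X` and the
variance ratio `var(A | C=c) / var(X | C=c)`. -/
theorem leftM_bias_rd (P : Measure Ω) [IsProbabilityMeasure P]
    (A Y X C : Ω → ℝ) (hA : IsBin A) (hY : IsBin Y) (hX : IsBin X) (hC : IsBin C)
    (hA1 : 0 < pr P (ev A 1)) (hA1' : pr P (ev A 1) < 1)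
    (hY1 : 0 < pr P (ev Y 1)) (hY1' : pr P (ev Y 1) < 1)
    (hfact : ∀ a y x γ : ℝ, (a = 0 ∨ a = 1) → (y = 0 ∨ y = 1) → (x = 0 ∨ x = 1) →
      (γ = 0 ∨ γ = 1) →
      pr P (ev A a ∩ ev Y y ∩ ev X x ∩ ev C γ) =
        pr P (ev A a) * pr P (ev Y y) * cpr P (ev X x) (ev A a) *
          cpr P (ev C γ) (ev A a ∩ ev Y y))
    (c : ℝ) (hc : c = 0 ∨ c = 1)
    (hXc : ∀ x : ℝ, (x = 0 ∨ x = 1) → 0 < pr P (ev X x ∩ ev C c))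
    (hAc : ∀ a : ℝ, (a = 0 ∨ a = 1) → 0 < pr P (ev A a ∩ ev C c)) :
    cpr P (ev Y 1) (ev X 1 ∩ ev C c) - cpr P (ev Y 1) (ev X 0 ∩ ev C c) =
      (cpr P (ev X 1) (ev A 1) - cpr P (ev X 1) (ev A 0)) *
        (cpr P (ev Y 1) (ev A 1 ∩ ev C c) - cpr P (ev Y 1) (ev A 0 ∩ ev C c)) *
        (varCond P A (ev C c) / varCond P X (ev C c)) := by
  classical
  have atom : ∀ a y x : ℝ, (a = 0 ∨ a = 1) → (y = 0 ∨ y = 1) → (x = 0 ∨ x = 1) →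
      pr P (ev A a ∩ ev Y y ∩ ev X x ∩ ev C c) =
        pr P (ev A a) * pr P (ev Y y) * cpr P (ev X x) (ev A a) *
          cpr P (ev C c) (ev A a ∩ ev Y y) :=
    fun a y x ha hy hx => hfact a y x c ha hy hx hc
  have hα' : pr P (ev A 0) = 1 - (pr P (ev A 1)) := by
    have h1 := pr_split P hA Set.univ
    rw [Set.univ_inter, Set.univ_inter, pr_univ P] at h1
    linarith
  have hβ' : pr P (ev Y 0) = 1 - (pr P (ev Y 1)) := by
    have h1 := pr_split P hY Set.univ
    rw [Set.univ_inter, Set.univ_inter, pr_univ P] at h1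
    linarith
  have hA0pos : 0 < pr P (ev A 0) := by rw [hα']; linarith
  have hs1' : cpr P (ev X 0) (ev A 1) = 1 - (cpr P (ev X 1) (ev A 1)) := by
    have h1 := pr_split P hX (ev A 1)
    rw [Set.inter_comm (ev A 1) (ev X 0), Set.inter_comm (ev A 1) (ev X 1)] at h1
    rw [cpr_eq P (ev X 0) (ev A 1) (ev_mble hA.1 1) hA1,
      cpr_eq P (ev X 1) (ev A 1) (ev_mble hA.1 1) hA1]
    field_simp
    linarith
  have hs0' : cpr P (ev X 0) (ev A 0) = 1 - (cpr P (ev X 1) (ev A 0)) := by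
    have h1 := pr_split P hX (ev A 0)
    rw [Set.inter_comm (ev A 0) (ev X 0), Set.inter_comm (ev A 0) (ev X 1)] at h1
    rw [cpr_eq P (ev X 0) (ev A 0) (ev_mble hA.1 0) hA0pos,
      cpr_eq P (ev X 1) (ev A 0) (ev_mble hA.1 0) hA0pos]
    field_simp
    linarith
  have hD1 : pr P (ev X 1 ∩ ev C c) =
      (1 - (pr P (ev A 1))) * (1 - (pr P (ev Y 1))) * (cpr P (ev X 1) (ev A 0)) * (cpr P (ev C c) (ev A 0 ∩ ev Y 0)) + (1 - (pr P (ev A 1))) * (pr P (ev Y 1)) * (cpr P (ev X 1) (ev A 0)) * (cpr P (ev C c) (ev A 0 ∩ ev Y 1)) +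
        (pr P (ev A 1)) * (1 - (pr P (ev Y 1))) * (cpr P (ev X 1) (ev A 1)) * (cpr P (ev C c) (ev A 1 ∩ ev Y 0)) + (pr P (ev A 1)) * (pr P (ev Y 1)) * (cpr P (ev X 1) (ev A 1)) * (cpr P (ev C c) (ev A 1 ∩ ev Y 1)) := by
    rw [pr_split P hA (ev X 1 ∩ ev C c),
      pr_split P hY (ev X 1 ∩ ev C c ∩ ev A 0),
      pr_split P hY (ev X 1 ∩ ev C c ∩ ev A 1),
      pr_perm1 P (ev X 1) (ev C c) (ev A 0) (ev Y 0),
      pr_perm1 P (ev X 1) (ev C c) (ev A 0) (ev Y 1),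
      pr_perm1 P (ev X 1) (ev C c) (ev A 1) (ev Y 0),
      pr_perm1 P (ev X 1) (ev C c) (ev A 1) (ev Y 1),
      atom 0 0 1 (Or.inl rfl) (Or.inl rfl) (Or.inr rfl), atom 0 1 1 (Or.inl rfl) (Or.inr rfl) (Or.inr rfl), atom 1 0 1 (Or.inr rfl) (Or.inl rfl) (Or.inr rfl), atom 1 1 1 (Or.inr rfl) (Or.inr rfl) (Or.inr rfl),
      hα', hβ']
    try ring
  have hD0 : pr P (ev X 0 ∩ ev C c) =
      (1 - (pr P (ev A 1))) * (1 - (pr P (ev Y 1))) * (1 - (cpr P (ev X 1) (ev A 0))) * (cpr P (ev C c) (ev A 0 ∩ ev Y 0)) + (1 - (pr P (ev A 1))) * (pr P (ev Y 1)) * (1 - (cpr P (ev X 1) (ev A 0))) * (cpr P (ev C c) (ev A 0 ∩ ev Y 1)) +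
        (pr P (ev A 1)) * (1 - (pr P (ev Y 1))) * (1 - (cpr P (ev X 1) (ev A 1))) * (cpr P (ev C c) (ev A 1 ∩ ev Y 0)) + (pr P (ev A 1)) * (pr P (ev Y 1)) * (1 - (cpr P (ev X 1) (ev A 1))) * (cpr P (ev C c) (ev A 1 ∩ ev Y 1)) := by
    rw [pr_split P hA (ev X 0 ∩ ev C c),
      pr_split P hY (ev X 0 ∩ ev C c ∩ ev A 0),
      pr_split P hY (ev X 0 ∩ ev C c ∩ ev A 1),
      pr_perm1 P (ev X 0) (ev C c) (ev A 0) (ev Y 0),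
      pr_perm1 P (ev X 0) (ev C c) (ev A 0) (ev Y 1),
      pr_perm1 P (ev X 0) (ev C c) (ev A 1) (ev Y 0),
      pr_perm1 P (ev X 0) (ev C c) (ev A 1) (ev Y 1),
      atom 0 0 0 (Or.inl rfl) (Or.inl rfl) (Or.inl rfl), atom 0 1 0 (Or.inl rfl) (Or.inr rfl) (Or.inl rfl), atom 1 0 0 (Or.inr rfl) (Or.inl rfl) (Or.inl rfl), atom 1 1 0 (Or.inr rfl) (Or.inr rfl) (Or.inl rfl),
      hα', hβ', hs0', hs1']
    try ring
  have hn1 : pr P (ev Y 1 ∩ (ev X 1 ∩ ev C c)) =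
      (1 - (pr P (ev A 1))) * (pr P (ev Y 1)) * (cpr P (ev X 1) (ev A 0)) * (cpr P (ev C c) (ev A 0 ∩ ev Y 1)) + (pr P (ev A 1)) * (pr P (ev Y 1)) * (cpr P (ev X 1) (ev A 1)) * (cpr P (ev C c) (ev A 1 ∩ ev Y 1)) := by
    rw [pr_split P hA (ev Y 1 ∩ (ev X 1 ∩ ev C c)),
      pr_perm2 P (ev Y 1) (ev X 1) (ev C c) (ev A 0),
      pr_perm2 P (ev Y 1) (ev X 1) (ev C c) (ev A 1),
      atom 0 1 1 (Or.inl rfl) (Or.inr rfl) (Or.inr rfl), atom 1 1 1 (Or.inr rfl) (Or.inr rfl) (Or.inr rfl),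
      hα']
    try ring
  have hn0 : pr P (ev Y 1 ∩ (ev X 0 ∩ ev C c)) =
      (1 - (pr P (ev A 1))) * (pr P (ev Y 1)) * (1 - (cpr P (ev X 1) (ev A 0))) * (cpr P (ev C c) (ev A 0 ∩ ev Y 1)) + (pr P (ev A 1)) * (pr P (ev Y 1)) * (1 - (cpr P (ev X 1) (ev A 1))) * (cpr P (ev C c) (ev A 1 ∩ ev Y 1)) := by
    rw [pr_split P hA (ev Y 1 ∩ (ev X 0 ∩ ev C c)),
      pr_perm2 P (ev Y 1) (ev X 0) (ev C c) (ev A 0),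
      pr_perm2 P (ev Y 1) (ev X 0) (ev C c) (ev A 1),
      atom 0 1 0 (Or.inl rfl) (Or.inr rfl) (Or.inl rfl), atom 1 1 0 (Or.inr rfl) (Or.inr rfl) (Or.inl rfl),
      hα', hs0', hs1']
    try ring
  have hu1 : pr P (ev A 1 ∩ ev C c) = (pr P (ev A 1)) * ((1 - (pr P (ev Y 1))) * (cpr P (ev C c) (ev A 1 ∩ ev Y 0)) + (pr P (ev Y 1)) * (cpr P (ev C c) (ev A 1 ∩ ev Y 1))) := by
    rw [pr_split P hY (ev A 1 ∩ ev C c),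
      pr_split P hX (ev A 1 ∩ ev C c ∩ ev Y 0),
      pr_split P hX (ev A 1 ∩ ev C c ∩ ev Y 1),
      pr_perm3 P (ev A 1) (ev C c) (ev Y 0) (ev X 0),
      pr_perm3 P (ev A 1) (ev C c) (ev Y 0) (ev X 1),
      pr_perm3 P (ev A 1) (ev C c) (ev Y 1) (ev X 0),
      pr_perm3 P (ev A 1) (ev C c) (ev Y 1) (ev X 1),
      atom 1 0 0 (Or.inr rfl) (Or.inl rfl) (Or.inl rfl), atom 1 0 1 (Or.inr rfl) (Or.inl rfl) (Or.inr rfl), atom 1 1 0 (Or.inr rfl) (Or.inr rfl) (Or.inl rfl), atom 1 1 1 (Or.inr rfl) (Or.inr rfl) (Or.inr rfl),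
      hβ', hs1']
    try ring
  have hu0 : pr P (ev A 0 ∩ ev C c) = (1 - (pr P (ev A 1))) * ((1 - (pr P (ev Y 1))) * (cpr P (ev C c) (ev A 0 ∩ ev Y 0)) + (pr P (ev Y 1)) * (cpr P (ev C c) (ev A 0 ∩ ev Y 1))) := by
    rw [pr_split P hY (ev A 0 ∩ ev C c),
      pr_split P hX (ev A 0 ∩ ev C c ∩ ev Y 0),
      pr_split P hX (ev A 0 ∩ ev C c ∩ ev Y 1),
      pr_perm3 P (ev A 0) (ev C c) (ev Y 0) (ev X 0),
      pr_perm3 P (ev A 0) (ev C c) (ev Y 0) (ev X 1),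
      pr_perm3 P (ev A 0) (ev C c) (ev Y 1) (ev X 0),
      pr_perm3 P (ev A 0) (ev C c) (ev Y 1) (ev X 1),
      atom 0 0 0 (Or.inl rfl) (Or.inl rfl) (Or.inl rfl), atom 0 0 1 (Or.inl rfl) (Or.inl rfl) (Or.inr rfl), atom 0 1 0 (Or.inl rfl) (Or.inr rfl) (Or.inl rfl), atom 0 1 1 (Or.inl rfl) (Or.inr rfl) (Or.inr rfl),
      hβ', hα', hs0']
    try ring
  have hm1 : pr P (ev Y 1 ∩ (ev A 1 ∩ ev C c)) = (pr P (ev A 1)) * (pr P (ev Y 1)) * (cpr P (ev C c) (ev A 1 ∩ ev Y 1)) := by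
    rw [pr_split P hX (ev Y 1 ∩ (ev A 1 ∩ ev C c)),
      pr_perm4 P (ev Y 1) (ev A 1) (ev C c) (ev X 0),
      pr_perm4 P (ev Y 1) (ev A 1) (ev C c) (ev X 1),
      atom 1 1 0 (Or.inr rfl) (Or.inr rfl) (Or.inl rfl), atom 1 1 1 (Or.inr rfl) (Or.inr rfl) (Or.inr rfl),
      hs1']
    try ring
  have hm0 : pr P (ev Y 1 ∩ (ev A 0 ∩ ev C c)) = (1 - (pr P (ev A 1))) * (pr P (ev Y 1)) * (cpr P (ev C c) (ev A 0 ∩ ev Y 1)) := by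
    rw [pr_split P hX (ev Y 1 ∩ (ev A 0 ∩ ev C c)),
      pr_perm4 P (ev Y 1) (ev A 0) (ev C c) (ev X 0),
      pr_perm4 P (ev Y 1) (ev A 0) (ev C c) (ev X 1),
      atom 0 1 0 (Or.inl rfl) (Or.inr rfl) (Or.inl rfl), atom 0 1 1 (Or.inl rfl) (Or.inr rfl) (Or.inr rfl),
      hα', hs0']
    try ring
  have hD1pos := hXc 1 (Or.inr rfl)
  have hD0pos := hXc 0 (Or.inl rfl)
  have hup1 := hAc 1 (Or.inr rfl)
  have hup0 := hAc 0 (Or.inl rfl)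
  have hDx : pr P (ev C c) = pr P (ev X 0 ∩ ev C c) + pr P (ev X 1 ∩ ev C c) := by
    rw [pr_split P hX (ev C c), Set.inter_comm (ev C c) (ev X 0),
      Set.inter_comm (ev C c) (ev X 1)]
  have hDa : pr P (ev C c) = pr P (ev A 0 ∩ ev C c) + pr P (ev A 1 ∩ ev C c) := by
    rw [pr_split P hA (ev C c), Set.inter_comm (ev C c) (ev A 0),
      Set.inter_comm (ev C c) (ev A 1)]
  have hDpos : 0 < pr P (ev C c) := by rw [hDx]; linarith
  have mC : MeasurableSet (ev C c) := ev_mble hC.1 c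
  have hstar : pr P (ev Y 1 ∩ (ev X 1 ∩ ev C c)) * pr P (ev X 0 ∩ ev C c) -
      pr P (ev X 1 ∩ ev C c) * pr P (ev Y 1 ∩ (ev X 0 ∩ ev C c)) =
      (cpr P (ev X 1) (ev A 1) - cpr P (ev X 1) (ev A 0)) *
        (pr P (ev Y 1 ∩ (ev A 1 ∩ ev C c)) * pr P (ev A 0 ∩ ev C c) -
          pr P (ev A 1 ∩ ev C c) * pr P (ev Y 1 ∩ (ev A 0 ∩ ev C c))) := by
    rw [hn1, hn0, hD1, hD0, hm1, hm0, hu1, hu0]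
    ring
  have e1 : (1:ℝ) - pr P (ev A 1 ∩ ev C c) / pr P (ev C c) =
      pr P (ev A 0 ∩ ev C c) / pr P (ev C c) := by
    field_simp
    linarith [hDa]
  have e2 : (1:ℝ) - pr P (ev X 1 ∩ ev C c) / pr P (ev C c) =
      pr P (ev X 0 ∩ ev C c) / pr P (ev C c) := by
    field_simp
    linarith [hDx]
  rw [cpr_eq P (ev Y 1) (ev X 1 ∩ ev C c) ((ev_mble hX.1 1).inter mC) hD1pos,
    cpr_eq P (ev Y 1) (ev X 0 ∩ ev C c) ((ev_mble hX.1 0).inter mC) hD0pos,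
    cpr_eq P (ev Y 1) (ev A 1 ∩ ev C c) ((ev_mble hA.1 1).inter mC) hup1,
    cpr_eq P (ev Y 1) (ev A 0 ∩ ev C c) ((ev_mble hA.1 0).inter mC) hup0,
    varCond_bin P hA (ev C c) mC hDpos,
    varCond_bin P hX (ev C c) mC hDpos,
    cpr_eq P (ev A 1) (ev C c) mC hDpos,
    cpr_eq P (ev X 1) (ev C c) mC hDpos,
    e1, e2,
    div_sub_div _ _ (ne_of_gt hD1pos) (ne_of_gt hD0pos),
    hstar,
    div_sub_div _ _ (ne_of_gt hup1) (ne_of_gt hup0)]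
  field_simp
  try ring
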